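/- arXiv:1011.4762 — 3 statements merged into one kernel-verified Lean document; each statement's English description precedes it below -/
import Mathlib

section
/- Let X be a compact topological space with a Borel probability measure μ, let L ⊆ C(X) be a finite-dimensional measure-separating subspace (with the topology induced by any norm on L), and let ν be a Borel measure on X absolutely continuous with respect to μ. Then, for each fixed j ∈ {1, …, q}, the map sending a q-tuple (u₁, …, u_q) of pairwise distinct elements of L to ν(Vⱼ), where Vⱼ = {x ∈ X : uⱼ(x) ≥ u_l(x) for all l = 1, …, q}, is continuous on the open subset of L^q consisting of q-tuples of pairwise distinct functions. -/
open MeasureTheory Filter Topology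

/-- For a measure-separating finite-dimensional subspace `L ⊆ C(X)` and a (finite) Borel
measure `ν ≪ μ`, the measure of the `j`-th generalized Voronoi cell depends continuously on
the `q`-tuple of (pairwise distinct) functions. -/
theorem stmt_11 {X : Type*} [TopologicalSpace X] [CompactSpace X]
    [MeasurableSpace X] [BorelSpace X]
    (μ : Measure X) [IsProbabilityMeasure μ]
    (L : Submodule ℝ C(X, ℝ)) [FiniteDimensional ℝ L]
    (hsep : ∀ f g : C(X, ℝ), f ∈ L → g ∈ L → f ≠ g → μ {x | f x = g x} = 0)
    (ν : Measure X) [IsFiniteMeasure ν] (hν : ν ≪ μ)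
    (q : ℕ) (j : Fin q) :
    ContinuousOn
      (fun u : Fin q → L =>
        ν {x | ∀ l : Fin q, (u l : C(X, ℝ)) x ≤ (u j : C(X, ℝ)) x})
      {u : Fin q → L | Function.Injective u} := by
  -- measurability of the cells
  have hmble : ∀ v : Fin q → L,
      MeasurableSet {x | ∀ l : Fin q, (v l : C(X, ℝ)) x ≤ (v j : C(X, ℝ)) x} := by
    intro v
    have : IsClosed {x | ∀ l : Fin q, (v l : C(X, ℝ)) x ≤ (v j : C(X, ℝ)) x} := by
      have : {x | ∀ l : Fin q, (v l : C(X, ℝ)) x ≤ (v j : C(X, ℝ)) x}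
          = ⋂ l : Fin q, {x | (v l : C(X, ℝ)) x ≤ (v j : C(X, ℝ)) x} := by
        ext x; simp
      rw [this]
      exact isClosed_iInter fun l =>
        isClosed_le (v l : C(X, ℝ)).continuous (v j : C(X, ℝ)).continuous
    exact this.measurableSet
  -- evaluation continuity
  have heval : ∀ (l : Fin q) (x : X),
      Continuous (fun v : Fin q → L => (v l : C(X, ℝ)) x) :=
    fun l x => (continuous_eval_const x).comp
      (continuous_subtype_val.comp (continuous_apply l))
  intro u hu
  rw [ContinuousWithinAt]
  refine tendsto_measure_of_ae_tendsto_indicator_of_isFiniteMeasure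
    (As := fun v : Fin q → L => {x | ∀ l : Fin q, (v l : C(X, ℝ)) x ≤ (v j : C(X, ℝ)) x})
    (𝓝[{u : Fin q → L | Function.Injective u}] u) (hmble u) (fun v => hmble v) ?_
  -- the a.e. good set
  have hnull : ν {x : X | ¬ ∀ l : Fin q, l ≠ j → (u l : C(X, ℝ)) x ≠ (u j : C(X, ℝ)) x} = 0 := by
    apply hν
    have hsub : {x : X | ¬ ∀ l : Fin q, l ≠ j → (u l : C(X, ℝ)) x ≠ (u j : C(X, ℝ)) x}
        ⊆ ⋃ l : Fin q, ⋃ _ : l ≠ j, {x | (u l : C(X, ℝ)) x = (u j : C(X, ℝ)) x} := by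
      intro x hx
      push_neg at hx
      obtain ⟨l, hl, hxl⟩ := hx
      exact Set.mem_iUnion.2 ⟨l, Set.mem_iUnion.2 ⟨hl, hxl⟩⟩
    refine measure_mono_null hsub (measure_iUnion_null fun l => measure_iUnion_null fun hl => ?_)
    exact hsep (u l) (u j) (u l).2 (u j).2
      (fun h => hl (hu (Subtype.ext h)))
  filter_upwards [ae_iff.2 hnull] with x hx
  by_cases hxV : ∀ l : Fin q, (u l : C(X, ℝ)) x ≤ (u j : C(X, ℝ)) x
  · have : ∀ᶠ v in 𝓝[{u : Fin q → L | Function.Injective u}] u,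
        ∀ l : Fin q, (v l : C(X, ℝ)) x ≤ (v j : C(X, ℝ)) x := by
      rw [eventually_all]
      intro l
      by_cases hlj : l = j
      · subst hlj; exact Filter.Eventually.of_forall fun v => le_refl _
      · have hlt : (u l : C(X, ℝ)) x < (u j : C(X, ℝ)) x :=
          lt_of_le_of_ne (hxV l) (hx l hlj)
        have : ∀ᶠ v in 𝓝 u, (v l : C(X, ℝ)) x < (v j : C(X, ℝ)) x := by
          have hcont : Continuous (fun v : Fin q → L =>
              ((v j : C(X, ℝ)) x - (v l : C(X, ℝ)) x)) := (heval j x).sub (heval l x)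
          have := (hcont.tendsto u).eventually (eventually_gt_nhds (by linarith : (0:ℝ) <
            (u j : C(X, ℝ)) x - (u l : C(X, ℝ)) x))
          filter_upwards [this] with v hv; linarith
        exact (this.filter_mono nhdsWithin_le_nhds).mono fun v hv => le_of_lt hv
    filter_upwards [this] with v hv
    simpa [Set.mem_setOf_eq, hv] using hxV
  · push_neg at hxV
    obtain ⟨l, hl⟩ := hxV
    have : ∀ᶠ v in 𝓝 u, (v j : C(X, ℝ)) x < (v l : C(X, ℝ)) x := by
      have hcont : Continuous (fun v : Fin q → L =>
          ((v l : C(X, ℝ)) x - (v j : C(X, ℝ)) x)) := (heval l x).sub (heval j x)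
      have := (hcont.tendsto u).eventually (eventually_gt_nhds (by linarith : (0:ℝ) <
        (u l : C(X, ℝ)) x - (u j : C(X, ℝ)) x))
      filter_upwards [this] with v hv; linarith
    filter_upwards [this.filter_mono nhdsWithin_le_nhds] with v hv
    constructor
    · intro hmem; exact absurd (hmem l) (not_le.2 hv)
    · intro hmem; exact absurd (hmem l) (not_le.2 hl)
end

section
/- Let U ⊆ ℝⁿ be a nonempty open connected set and let f : ℝⁿ → ℝ be a function that is analytic on U and not identically zero on U. Then the zero set {x ∈ U : f(x) = 0} has Lebesgue measure zero. -/
open MeasureTheory Metric Set Filter Topology NNReal ENNReal Pointwise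

set_option maxHeartbeats 2000000 in
/-- Key local lemma: if an analytic function vanishes on a set having density `1`
at a point `x` of the set, then it vanishes in a neighborhood of `x`. -/
lemma aux_eventually_zero {n : ℕ} {f : EuclideanSpace ℝ (Fin n) → ℝ}
    {Z : Set (EuclideanSpace ℝ (Fin n))} {x : EuclideanSpace ℝ (Fin n)}
    (hfa : AnalyticAt ℝ f x) (hZ : ∀ z ∈ Z, f z = 0) (hx : x ∈ Z)
    (hd : Tendsto (fun s : ℝ => volume (Z ∩ closedBall x s) / volume (closedBall x s))
      (𝓝[>] 0) (𝓝 1)) :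
    f =ᶠ[𝓝 x] 0 := by
  classical
  obtain ⟨p, r, hp⟩ := hfa
  by_cases hvan : ∀ k : ℕ, ∀ u, (p k fun _ => u) = 0
  · -- all diagonal coefficients vanish: f vanishes on the ball of convergence
    filter_upwards [EMetric.ball_mem_nhds x hp.r_pos] with z hz
    have hz' : z - x ∈ Metric.eball (0 : EuclideanSpace ℝ (Fin n)) r := by
      rw [EMetric.mem_ball, edist_eq_enorm_sub] at hz ⊢
      simpa using hz
    have h1 : HasSum (fun m : ℕ => p m fun _ => z - x) (f (x + (z - x))) := hp.hasSum hz'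
    have h2 : (fun m : ℕ => p m fun _ => z - x) = fun _ => (0 : ℝ) :=
      funext fun m => hvan m _
    rw [h2] at h1
    have := h1.unique hasSum_zero
    simpa using this
  · exfalso
    push_neg at hvan
    -- least order `k` with a nonvanishing diagonal coefficient
    set k := Nat.find hvan with hkdef
    obtain ⟨u₀, hu₀⟩ := Nat.find_spec hvan
    rw [← hkdef] at hu₀
    have hmin : ∀ m, m < k → ∀ u, (p m fun _ => u) = 0 := by
      intro m hm u
      by_contra h
      exact Nat.find_min hvan hm ⟨u, h⟩
    have hfx : f x = 0 := hZ x hx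
    have hk1 : 1 ≤ k := by
      rcases Nat.eq_zero_or_pos k with h0 | h
      · exfalso
        have h0mem : (0 : EuclideanSpace ℝ (Fin n)) ∈
            Metric.eball (0 : EuclideanSpace ℝ (Fin n)) r := by
          simpa using hp.r_pos
        have hsum0 : HasSum (fun m : ℕ => p m fun _ => (0 : EuclideanSpace ℝ (Fin n))) (f x) := by
          simpa using hp.hasSum h0mem
        have hzero : ∀ m : ℕ, m ≠ 0 →
            (p m fun _ => (0 : EuclideanSpace ℝ (Fin n))) = 0 := by
          intro m hm
          exact (p m).map_coord_zero ⟨0, Nat.pos_of_ne_zero hm⟩ rfl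
        have h0sum : HasSum (fun m : ℕ => p m fun _ => (0 : EuclideanSpace ℝ (Fin n)))
            (p 0 fun _ => (0 : EuclideanSpace ℝ (Fin n))) :=
          hasSum_single 0 fun m hm => hzero m hm
        have hval : (p 0 fun _ => (0 : EuclideanSpace ℝ (Fin n))) = f x := h0sum.unique hsum0
        rw [h0] at hu₀
        apply hu₀
        have : (fun _ : Fin 0 => u₀) = fun _ : Fin 0 => (0 : EuclideanSpace ℝ (Fin n)) :=
          funext fun i => i.elim0
        rw [this, hval, hfx]
      · exact h
    have hu0ne : u₀ ≠ 0 := by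
      rintro rfl
      exact hu₀ ((p k).map_coord_zero ⟨0, hk1⟩ rfl)
    have hu₀norm : 0 < ‖u₀‖ := norm_pos_iff.2 hu0ne
    -- continuity of the diagonal coefficient of order k
    have hcont : Continuous fun u : EuclideanSpace ℝ (Fin n) => (p k fun _ => u) :=
      (p k).cont.comp (continuous_pi fun _ => continuous_id)
    set c := |p k fun _ => u₀| with hcdef
    have hc : 0 < c := abs_pos.2 hu₀
    obtain ⟨δ₁, hδ₁pos, hδ₁⟩ : ∃ δ > 0, ∀ u ∈ ball u₀ δ, c / 2 < |p k fun _ => u| := by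
      have hop : IsOpen {u : EuclideanSpace ℝ (Fin n) | c / 2 < |p k fun _ => u|} :=
        isOpen_lt continuous_const (continuous_abs.comp hcont)
      have hmem : u₀ ∈ {u : EuclideanSpace ℝ (Fin n) | c / 2 < |p k fun _ => u|} := by
        simp only [mem_setOf_eq, ← hcdef]
        linarith
      obtain ⟨δ, hδpos, h⟩ := Metric.isOpen_iff.1 hop u₀ hmem
      exact ⟨δ, hδpos, fun u hu => h hu⟩
    set δ := min δ₁ (‖u₀‖ / 2) with hδdef
    have hδpos : 0 < δ := lt_min hδ₁pos (half_pos hu₀norm)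
    have hδball : ∀ u ∈ ball u₀ δ, c / 2 < |p k fun _ => u| := fun u hu =>
      hδ₁ u (ball_subset_ball (min_le_left _ _) hu)
    have hnorm_lb : ∀ u ∈ ball u₀ δ, ‖u₀‖ / 2 ≤ ‖u‖ := by
      intro u hu
      have h1 : dist u u₀ < ‖u₀‖ / 2 := lt_of_lt_of_le (mem_ball.1 hu) (min_le_right _ _)
      have h2 : ‖u₀‖ - ‖u‖ ≤ dist u u₀ := by
        rw [dist_eq_norm]
        calc ‖u₀‖ - ‖u‖ ≤ ‖u₀ - u‖ := norm_sub_norm_le _ _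
        _ = ‖u - u₀‖ := norm_sub_rev _ _
      linarith
    set B := ‖u₀‖ + δ with hBdef
    have hB : 0 < B := by positivity
    have hnorm_ub : ∀ u ∈ ball u₀ δ, ‖u‖ ≤ B := by
      intro u hu
      have h1 : dist u u₀ < δ := mem_ball.1 hu
      have h2 : ‖u‖ - ‖u₀‖ ≤ dist u u₀ := by
        rw [dist_eq_norm]
        exact norm_sub_norm_le _ _
      linarith
    -- radius of geometric approximation
    obtain ⟨r', hr'pos, hr'lt⟩ : ∃ r' : ℝ≥0, 0 < r' ∧ (r' : ℝ≥0∞) < r := by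
      rcases ENNReal.lt_iff_exists_nnreal_btwn.1 hp.r_pos with ⟨r', h1, h2⟩
      exact ⟨r', by exact_mod_cast h1, h2⟩
    have hr'R : (0 : ℝ) < (r' : ℝ) := by exact_mod_cast hr'pos
    obtain ⟨a, ha, C, hC, happrox⟩ := hp.uniform_geometric_approx' hr'lt
    -- threshold for t
    set Q := (B / (r' : ℝ)) ^ (k + 1) with hQdef
    have hQ : 0 < Q := by positivity
    set t₁ := (c / 2) / (C * Q + 1) with ht₁def
    have hCQ : 0 < C * Q + 1 := by positivity
    have ht₁pos : 0 < t₁ := by positivity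
    have ht₁mul : t₁ * (C * Q + 1) = c / 2 := by
      rw [ht₁def]; field_simp
    set ε := min (r' : ℝ) (t₁ * ‖u₀‖ / 2) with hεdef
    have hεpos : 0 < ε := lt_min hr'R (by positivity)
    -- the open cone
    set C₀ : Set (EuclideanSpace ℝ (Fin n)) :=
      ⋃ (t : ℝ) (_ : 0 < t), t • ball u₀ δ with hC₀def
    have hC₀open : IsOpen C₀ :=
      isOpen_iUnion fun t => isOpen_iUnion fun ht => isOpen_ball.smul₀ (ne_of_gt ht)
    -- `f` does not vanish on the truncated cone near `x`
    have key : ∀ h ∈ C₀ ∩ ball (0 : EuclideanSpace ℝ (Fin n)) ε, f (x + h) ≠ 0 := by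
      rintro h ⟨hhC, hhb⟩
      simp only [hC₀def, mem_iUnion] at hhC
      obtain ⟨t, ht, hmem⟩ := hhC
      rw [mem_smul_set] at hmem
      obtain ⟨u, hu, rfl⟩ := hmem
      have hunorm_lb := hnorm_lb u hu
      have hunorm_ub := hnorm_ub u hu
      have hnormh : ‖t • u‖ = t * ‖u‖ := by
        rw [norm_smul, Real.norm_eq_abs, abs_of_pos ht]
      have hhε : ‖t • u‖ < ε := mem_ball_zero_iff.1 hhb
      have htlt : t < t₁ := by
        have h1 : t * (‖u₀‖ / 2) ≤ t * ‖u‖ :=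
          mul_le_mul_of_nonneg_left hunorm_lb (le_of_lt ht)
        have h2 : t * ‖u‖ < t₁ * ‖u₀‖ / 2 := by
          rw [← hnormh]
          exact lt_of_lt_of_le hhε (min_le_right _ _)
        nlinarith
      -- partial sum of order k+1 reduces to the k-th term
      have hps : p.partialSum (k + 1) (t • u) = (p k fun _ => t • u) := by
        rw [FormalMultilinearSeries.partialSum]
        apply Finset.sum_eq_single_of_mem k (Finset.self_mem_range_succ k)
        intro m hm hne
        exact hmin m (lt_of_le_of_ne (Nat.lt_succ_iff.1 (Finset.mem_range.1 hm)) hne) _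
      have hsmul : (p k fun _ => t • u) = t ^ k * (p k fun _ => u) := by
        have h := (p k).map_smul_univ (fun _ => t) (fun _ => u)
        simpa [Finset.prod_const, smul_eq_mul] using h
      have hmain : t ^ k * (c / 2) < |p.partialSum (k + 1) (t • u)| := by
        rw [hps, hsmul, abs_mul, abs_pow, abs_of_pos ht]
        exact mul_lt_mul_of_pos_left (hδball u hu) (pow_pos ht k)
      -- geometric bound on the remainder
      have hball' : t • u ∈ ball (0 : EuclideanSpace ℝ (Fin n)) (r' : ℝ) :=
        mem_ball_zero_iff.2 (lt_of_lt_of_le hhε (min_le_left _ _))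
      have happ := happrox (t • u) hball' (k + 1)
      have herr : C * (a * (‖t • u‖ / (r' : ℝ))) ^ (k + 1) < t ^ k * (c / 2) := by
        have h1 : a * (‖t • u‖ / (r' : ℝ)) ≤ t * B / (r' : ℝ) := by
          have h2 : ‖t • u‖ ≤ t * B := by
            rw [hnormh]
            exact mul_le_mul_of_nonneg_left hunorm_ub (le_of_lt ht)
          have h3 : ‖t • u‖ / (r' : ℝ) ≤ t * B / (r' : ℝ) := by gcongr
          calc a * (‖t • u‖ / (r' : ℝ)) ≤ 1 * (‖t • u‖ / (r' : ℝ)) := by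
                apply mul_le_mul_of_nonneg_right (le_of_lt ha.2)
                positivity
          _ = ‖t • u‖ / (r' : ℝ) := one_mul _
          _ ≤ t * B / (r' : ℝ) := h3
        have h0 : 0 ≤ a * (‖t • u‖ / (r' : ℝ)) := mul_nonneg ha.1.le (by positivity)
        have h4 : (a * (‖t • u‖ / (r' : ℝ))) ^ (k + 1) ≤ (t * B / (r' : ℝ)) ^ (k + 1) :=
          pow_le_pow_left₀ h0 h1 _
        have h5 : (t * B / (r' : ℝ)) ^ (k + 1) = t ^ (k + 1) * Q := by
          rw [hQdef, mul_div_assoc, mul_pow]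
        have h6 : C * (t ^ (k + 1) * Q) < t ^ k * (c / 2) := by
          have h7 : t ^ (k + 1) = t ^ k * t := pow_succ t k
          rw [h7, ← ht₁mul]
          have hp1 : 0 < t ^ k := pow_pos ht k
          have hCQpos : 0 < C * Q := mul_pos hC hQ
          have hstep : t * (C * Q) < t₁ * (C * Q + 1) := by
            nlinarith [mul_lt_mul_of_pos_right htlt hCQpos]
          calc C * (t ^ k * t * Q) = t ^ k * (t * (C * Q)) := by ring
          _ < t ^ k * (t₁ * (C * Q + 1)) := mul_lt_mul_of_pos_left hstep hp1
        calc C * (a * (‖t • u‖ / (r' : ℝ))) ^ (k + 1)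
            ≤ C * (t * B / (r' : ℝ)) ^ (k + 1) := mul_le_mul_of_nonneg_left h4 hC.le
        _ = C * (t ^ (k + 1) * Q) := by rw [h5]
        _ < t ^ k * (c / 2) := h6
      intro hzero
      rw [hzero] at happ
      have : |p.partialSum (k + 1) (t • u)| ≤ C * (a * (‖t • u‖ / (r' : ℝ))) ^ (k + 1) := by
        calc |p.partialSum (k + 1) (t • u)| = ‖(0 : ℝ) - p.partialSum (k + 1) (t • u)‖ := by
              rw [zero_sub, norm_neg, Real.norm_eq_abs]
        _ ≤ C * (a * (‖t • u‖ / (r' : ℝ))) ^ (k + 1) := happ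
      linarith
    -- measure-theoretic contradiction with density 1
    set ν := (volume : Measure (EuclideanSpace ℝ (Fin n))) with hνdef
    set A := ν (C₀ ∩ ball (0 : EuclideanSpace ℝ (Fin n)) 1) with hAdef
    set Bv := ν (ball (0 : EuclideanSpace ℝ (Fin n)) 1) with hBvdef
    have hA : 0 < A := by
      apply (hC₀open.inter isOpen_ball).measure_pos ν
      refine ⟨(min 1 (1 / B)) • u₀, ?_, ?_⟩
      · simp only [hC₀def, mem_iUnion]
        exact ⟨min 1 (1 / B), lt_min one_pos (by positivity),
          smul_mem_smul_set (mem_ball_self hδpos)⟩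
      · rw [mem_ball_zero_iff, norm_smul, Real.norm_eq_abs,
          abs_of_pos (lt_min one_pos (by positivity : (0:ℝ) < 1 / B))]
        have h1 : min 1 (1 / B) ≤ 1 / B := min_le_right _ _
        have h2 : ‖u₀‖ < B := by
          rw [hBdef]; linarith
        calc min 1 (1 / B) * ‖u₀‖ ≤ (1 / B) * ‖u₀‖ :=
              mul_le_mul_of_nonneg_right h1 (norm_nonneg _)
        _ < (1 / B) * B := by
              apply mul_lt_mul_of_pos_left h2
              positivity
        _ = 1 := by field_simp
    have hBvne : Bv ≠ ⊤ := (measure_ball_lt_top).ne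
    have hq : 0 < A / Bv := ENNReal.div_pos hA.ne' hBvne
    -- scaling of the truncated cone
    have hsub : ∀ s : ℝ, 0 < s → s • C₀ ⊆ C₀ := by
      intro s hs h hmem
      rw [mem_smul_set] at hmem
      obtain ⟨h', hh', rfl⟩ := hmem
      simp only [hC₀def, mem_iUnion] at hh' ⊢
      obtain ⟨t, ht, hm⟩ := hh'
      rw [mem_smul_set] at hm
      obtain ⟨y, hy, rfl⟩ := hm
      exact ⟨s * t, mul_pos hs ht, mem_smul_set.2 ⟨y, hy, mul_smul s t y⟩⟩
    have hsmulC₀ : ∀ s : ℝ, 0 < s → s • C₀ = C₀ := by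
      intro s hs
      apply Subset.antisymm (hsub s hs)
      intro h hh
      have h1 : s⁻¹ • h ∈ C₀ := hsub s⁻¹ (by positivity) (smul_mem_smul_set hh)
      have h2 : h = s • (s⁻¹ • h) := (smul_inv_smul₀ (ne_of_gt hs) h).symm
      rw [h2]
      exact smul_mem_smul_set h1
    have hscale : ∀ s : ℝ, 0 < s →
        C₀ ∩ ball (0 : EuclideanSpace ℝ (Fin n)) s =
          s • (C₀ ∩ ball (0 : EuclideanSpace ℝ (Fin n)) 1) := by
      intro s hs
      rw [smul_set_inter₀ (ne_of_gt hs), hsmulC₀ s hs, _root_.smul_ball (ne_of_gt hs), smul_zero,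
        Real.norm_eq_abs, abs_of_pos hs, mul_one]
    -- eventual bound on the density ratio
    have hbound : ∀ s : ℝ, s ∈ Ioo (0 : ℝ) ε →
        ν (Z ∩ closedBall x s) / ν (closedBall x s) + A / Bv ≤ 1 := by
      rintro s ⟨hs0, hsε⟩
      set S := C₀ ∩ ball (0 : EuclideanSpace ℝ (Fin n)) s with hSdef
      set X := x +ᵥ S with hXdef
      have hSopen : IsOpen S := hC₀open.inter isOpen_ball
      have hXopen : IsOpen X := hSopen.vadd x
      have hXsub : X ⊆ closedBall x s := by
        rintro - ⟨h, hh, rfl⟩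
        have : ‖h‖ < s := mem_ball_zero_iff.1 hh.2
        simp only [vadd_eq_add, mem_closedBall]
        rw [dist_eq_norm, add_sub_cancel_left]
        exact le_of_lt this
      have hdisj : Disjoint (Z ∩ closedBall x s) X := by
        rw [disjoint_left]
        rintro z ⟨hzZ, -⟩ ⟨h, hh, rfl⟩
        have hh' : h ∈ C₀ ∩ ball (0 : EuclideanSpace ℝ (Fin n)) ε :=
          ⟨hh.1, ball_subset_ball (le_of_lt hsε) hh.2⟩
        exact key h hh' (hZ _ hzZ)
      have hsum : ν (Z ∩ closedBall x s) + ν X ≤ ν (closedBall x s) := by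
        rw [← measure_union hdisj hXopen.measurableSet]
        exact measure_mono (union_subset inter_subset_right hXsub)
      have hXmeas : ν X = ENNReal.ofReal (s ^ Module.finrank ℝ (EuclideanSpace ℝ (Fin n))) * A := by
        rw [hXdef, measure_vadd, hSdef, hscale s hs0, hνdef, Measure.addHaar_smul,
          abs_of_pos (pow_pos hs0 _)]
      have hcb : ν (closedBall x s) =
          ENNReal.ofReal (s ^ Module.finrank ℝ (EuclideanSpace ℝ (Fin n))) * Bv := by
        rw [hνdef, Measure.addHaar_closedBall _ _ (le_of_lt hs0)]
      have hfac0 : ENNReal.ofReal (s ^ Module.finrank ℝ (EuclideanSpace ℝ (Fin n))) ≠ 0 := by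
        simp only [ne_eq, ENNReal.ofReal_eq_zero, not_le]
        positivity
      have hfactop : ENNReal.ofReal (s ^ Module.finrank ℝ (EuclideanSpace ℝ (Fin n))) ≠ ⊤ :=
        ENNReal.ofReal_ne_top
      have hXdiv : ν X / ν (closedBall x s) = A / Bv := by
        rw [hXmeas, hcb, ENNReal.mul_div_mul_left _ _ hfac0 hfactop]
      rw [← hXdiv, ENNReal.div_add_div_same]
      calc (ν (Z ∩ closedBall x s) + ν X) / ν (closedBall x s)
          ≤ ν (closedBall x s) / ν (closedBall x s) := ENNReal.div_le_div_right hsum _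
      _ ≤ 1 := ENNReal.div_self_le_one
    -- pass to the limit
    have hev : ∀ᶠ s in 𝓝[>] (0 : ℝ),
        ν (Z ∩ closedBall x s) / ν (closedBall x s) + A / Bv ≤ 1 := by
      filter_upwards [Ioo_mem_nhdsGT_of_mem (Set.mem_Ico.2 ⟨le_refl (0:ℝ), hεpos⟩)] with s hs
      exact hbound s hs
    have htend : Tendsto (fun s : ℝ => ν (Z ∩ closedBall x s) / ν (closedBall x s) + A / Bv)
        (𝓝[>] 0) (𝓝 (1 + A / Bv)) := hd.add tendsto_const_nhds
    have hle : (1 : ℝ≥0∞) + A / Bv ≤ 1 := le_of_tendsto htend hev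
    have : A / Bv = 0 := by
      by_contra hne
      have h1 : (1 : ℝ≥0∞) < 1 + A / Bv :=
        ENNReal.lt_add_right one_ne_top hne
      exact absurd hle (not_le.2 h1)
    exact absurd this hq.ne'

/-- The zero set of a real-analytic function, not identically zero on a nonempty open
connected set `U ⊆ ℝⁿ`, has Lebesgue measure zero. -/
theorem stmt_12 (n : ℕ) (U : Set (EuclideanSpace ℝ (Fin n)))
    (hUo : IsOpen U) (hUc : IsConnected U)
    (f : EuclideanSpace ℝ (Fin n) → ℝ)
    (hf : AnalyticOnNhd ℝ f U) (hnz : ∃ x ∈ U, f x ≠ 0) :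
    volume {x ∈ U | f x = 0} = 0 := by
  by_contra hvol
  set Z := {x ∈ U | f x = 0} with hZdef
  -- Z is measurable
  have hV : IsOpen {x ∈ U | f x ≠ 0} := by
    have : {x ∈ U | f x ≠ 0} = U ∩ f ⁻¹' ({0}ᶜ) := rfl
    rw [this]
    exact (hf.continuousOn).isOpen_inter_preimage hUo isClosed_singleton.isOpen_compl
  have hZmeas : MeasurableSet Z := by
    have : Z = U \ {x ∈ U | f x ≠ 0} := by
      ext z
      simp only [hZdef, mem_setOf_eq, mem_diff, not_and, not_not]
      constructor
      · rintro ⟨h1, h2⟩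
        exact ⟨h1, fun _ => h2⟩
      · rintro ⟨h1, h2⟩
        exact ⟨h1, h2 h1⟩
    rw [this]
    exact hUo.measurableSet.diff hV.measurableSet
  -- find a density point of Z inside Z
  have hres : (volume.restrict Z) ≠ 0 := by
    intro h
    apply hvol
    have := congrArg (fun μ : Measure (EuclideanSpace ℝ (Fin n)) => μ Set.univ) h
    simpa [Measure.restrict_apply_univ] using this
  have : (ae (volume.restrict Z)).NeBot := ae_neBot.2 hres
  obtain ⟨x, hxd, hxZ⟩ :=
    ((Besicovitch.ae_tendsto_measure_inter_div volume Z).and (ae_restrict_mem hZmeas)).exists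
  have hxU : x ∈ U := hxZ.1
  have hZ0 : ∀ z ∈ Z, f z = 0 := fun z hz => hz.2
  have hev : f =ᶠ[𝓝 x] 0 := aux_eventually_zero (hf x hxU) hZ0 hxZ hxd
  have heq : EqOn f 0 U :=
    hf.eqOn_zero_of_preconnected_of_eventuallyEq_zero hUc.isPreconnected hxU hev
  obtain ⟨y, hyU, hy⟩ := hnz
  exact hy (heq hyU)
end

section
/- Let f₁, …, f_q be q pairwise distinct real polynomials of degree at most 2, and let g(x) = max{f₁(x), …, f_q(x)} be their upper envelope. Then the set of points x ∈ ℝ at which g is not analytic has at most 2(q−1) elements. -/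
open Polynomial Set

/-- A quadratic with nonpositive leading coefficient is concave. -/
lemma quad_concave {a b c : ℝ} (ha : a ≤ 0) :
    ConcaveOn ℝ Set.univ (fun x : ℝ => a * x ^ 2 + b * x + c) := by
  refine ⟨convex_univ, ?_⟩
  intro x _ y _ s t hs ht hst
  have hts : t = 1 - s := by linarith
  subst hts
  simp only [smul_eq_mul]
  nlinarith [mul_nonneg (neg_nonneg.2 ha) (mul_nonneg (mul_nonneg hs ht) (sq_nonneg (x - y))),
    sq_nonneg (x - y)]

/-- Expansion of the evaluation of a polynomial of degree at most 2. -/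
lemma eval_quad {d : Polynomial ℝ} (hd : d.degree ≤ 2) (x : ℝ) :
    d.eval x = d.coeff 2 * x ^ 2 + d.coeff 1 * x + d.coeff 0 := by
  have hnat : d.natDegree < 3 := by
    have h2 : d.natDegree ≤ 2 := Polynomial.natDegree_le_iff_degree_le.mpr (by exact_mod_cast hd)
    omega
  rw [Polynomial.eval_eq_sum_range' hnat]
  simp [Finset.sum_range_succ]
  ring

/-- The frontier of a convex subset of `ℝ` has at most two points. -/
lemma frontier_convex_real (U : Set ℝ) (hU : Convex ℝ U) :
    (frontier U).Finite ∧ (frontier U).ncard ≤ 2 := by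
  set F := frontier U with hF
  have key : ∀ x y z : ℝ, x < y → y < z → x ∈ closure U → z ∈ closure U →
      y ∈ interior U := by
    intro x y z hxy hyz hx hz
    obtain ⟨u, hu, hux⟩ := Metric.mem_closure_iff.1 hx (y - x) (by linarith)
    obtain ⟨v, hv, hvz⟩ := Metric.mem_closure_iff.1 hz (z - y) (by linarith)
    rw [Real.dist_eq] at hux hvz
    have h1 : u < y := by
      rcases abs_lt.1 hux with ⟨h1, h2⟩; linarith
    have h2 : y < v := by
      rcases abs_lt.1 hvz with ⟨h1, h2⟩; linarith
    have hIcc : Set.Icc u v ⊆ U := hU.ordConnected.out hu hv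
    have : Set.Ioo u v ⊆ interior U :=
      interior_maximal (Set.Ioo_subset_Icc_self.trans hIcc) isOpen_Ioo
    exact this ⟨h1, h2⟩
  have H : ∀ p q r : ℝ, p < q → q < r → p ∈ F → q ∈ F → r ∈ F → False := by
    intro p q r h1 h2 hp hq hr
    exact hq.2 (key p q r h1 h2 hp.1 hr.1)
  have H3 : ∀ p q r : ℝ, p ∈ F → q ∈ F → r ∈ F → p ≠ q → p ≠ r → q ≠ r → False := by
    intro p q r hp hq hr hpq hpr hqr
    rcases lt_trichotomy p q with h1 | h1 | h1
    · rcases lt_trichotomy q r with h2 | h2 | h2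
      · exact H p q r h1 h2 hp hq hr
      · exact hqr h2
      · rcases lt_trichotomy p r with h3 | h3 | h3
        · exact H p r q h3 h2 hp hr hq
        · exact hpr h3
        · exact H r p q h3 h1 hr hp hq
    · exact hpq h1
    · rcases lt_trichotomy p r with h2 | h2 | h2
      · exact H q p r h1 h2 hq hp hr
      · exact hpr h2
      · rcases lt_trichotomy q r with h3 | h3 | h3
        · exact H q r p h3 h2 hq hr hp
        · exact hqr h3
        · exact H r q p h3 h1 hr hq hp
  by_cases hFe : F = ∅
  · rw [hFe]; simp
  obtain ⟨a, ha⟩ := Set.nonempty_iff_ne_empty.2 hFe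
  by_cases hFa : F ⊆ {a}
  · constructor
    · exact (Set.finite_singleton a).subset hFa
    · calc F.ncard ≤ ({a} : Set ℝ).ncard := Set.ncard_le_ncard hFa (Set.finite_singleton a)
        _ ≤ 2 := by simp
  · obtain ⟨b, hb, hba⟩ : ∃ b ∈ F, b ≠ a := by
      by_contra h
      push_neg at h
      exact hFa fun x hx => h x hx
    have hsub : F ⊆ {a, b} := by
      intro c hc
      by_contra hcc
      simp only [Set.mem_insert_iff, Set.mem_singleton_iff, not_or] at hcc
      exact H3 a b c ha hb hc (Ne.symm hba) (Ne.symm hcc.1) (Ne.symm hcc.2)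
    constructor
    · exact ((Set.finite_singleton b).insert a).subset hsub
    · calc F.ncard ≤ ({a, b} : Set ℝ).ncard :=
            Set.ncard_le_ncard hsub ((Set.finite_singleton b).insert a)
        _ ≤ 2 := Set.ncard_insert_le a {b} |>.trans (by simp)

/-- Main auxiliary lemma: envelope over a finite set of polynomials of degree at most 2. -/
lemma envelope_aux : ∀ (s : Finset (Polynomial ℝ)) (hs : s.Nonempty),
    (∀ p ∈ s, p.degree ≤ 2) →
    ({x : ℝ | ¬ AnalyticAt ℝ (fun y => s.sup' hs fun p => p.eval y) x}.Finite ∧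
     {x : ℝ | ¬ AnalyticAt ℝ (fun y => s.sup' hs fun p => p.eval y) x}.ncard ≤ 2 * (s.card - 1)) := by
  intro s
  induction s using Finset.strongInduction with
  | _ s ih =>
    intro hs hdeg
    obtain ⟨p0, hp0s, hp0min⟩ := s.exists_min_image (fun p => p.coeff 2) hs
    by_cases htne : (s.erase p0).Nonempty
    case neg =>
      -- s = {p0}
      have hse : s.erase p0 = ∅ := Finset.not_nonempty_iff_eq_empty.1 htne
      have hseq : s = {p0} := by
        rcases (Finset.erase_eq_empty_iff s p0).1 hse with h | h
        · exact absurd h (Finset.nonempty_iff_ne_empty.1 hs)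
        · exact h
      subst hseq
      have hempty : {x : ℝ | ¬ AnalyticAt ℝ
          (fun y => ({p0} : Finset (Polynomial ℝ)).sup' hs fun p => p.eval y) x} = ∅ := by
        rw [Set.eq_empty_iff_forall_notMem]
        intro x hx
        apply hx
        have hA : AnalyticAt ℝ (fun y => p0.eval y) x :=
          (AnalyticOnNhd.eval_polynomial (𝕜 := ℝ) p0) x (Set.mem_univ x)
        simp only [Finset.sup'_singleton]
        exact hA
      rw [hempty]
      simp
    case pos =>
      classical
      set t := s.erase p0 with ht
      have hins : insert p0 t = s := Finset.insert_erase hp0s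
      set g' : ℝ → ℝ := fun y => t.sup' htne fun p => p.eval y with hg'
      have hsup : ∀ y : ℝ, s.sup' hs (fun p => p.eval y) = p0.eval y ⊔ g' y := by
        intro y
        have h1 : s.sup' hs (fun p => p.eval y)
            = (insert p0 t).sup' (hins ▸ hs) (fun p => p.eval y) :=
          Finset.sup'_congr hs hins.symm (fun _ _ => rfl)
        rw [h1]
        exact Finset.sup'_insert (H := htne) (f := fun p => p.eval y)
      set U : Set ℝ := {x : ℝ | ∀ p ∈ t, p.eval x < p0.eval x} with hU
      have hUconv : Convex ℝ U := by
        have hUeq : U = ⋂ p ∈ t, {x : ℝ | 0 < (p0 - p).eval x} := by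
          ext x
          simp [hU, sub_pos]
        rw [hUeq]
        refine convex_iInter₂ fun p hp => ?_
        have hps : p ∈ s := Finset.mem_of_mem_erase hp
        have hdegd : (p0 - p).degree ≤ 2 :=
          (Polynomial.degree_sub_le p0 p).trans (max_le (hdeg p0 hp0s) (hdeg p hps))
        have hcoef : (p0 - p).coeff 2 ≤ 0 := by
          have := hp0min p hps
          simp only [Polynomial.coeff_sub]
          linarith
        have hconc := quad_concave (b := (p0 - p).coeff 1) (c := (p0 - p).coeff 0) hcoef
        have hfeq : (fun x : ℝ => (p0 - p).coeff 2 * x ^ 2 + (p0 - p).coeff 1 * x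
            + (p0 - p).coeff 0) = fun x => (p0 - p).eval x :=
          funext fun x => (eval_quad hdegd x).symm
        rw [hfeq] at hconc
        have := hconc.convex_gt 0
        simpa using this
      obtain ⟨hFfin, hFcard⟩ := frontier_convex_real U hUconv
      have hts : t ⊂ s := Finset.erase_ssubset hp0s
      obtain ⟨hN'fin, hN'card⟩ := ih t hts htne
        (fun p hp => hdeg p (Finset.mem_of_mem_erase hp))
      set N : Set ℝ := {x : ℝ | ¬ AnalyticAt ℝ (fun y => s.sup' hs fun p => p.eval y) x} with hN
      set N' : Set ℝ := {x : ℝ | ¬ AnalyticAt ℝ g' x} with hN'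
      have hincl : N ⊆ N' ∪ frontier U := by
        intro x hx
        by_contra hno
        simp only [Set.mem_union, not_or] at hno
        obtain ⟨hxN', hxF⟩ := hno
        have hg'a : AnalyticAt ℝ g' x := not_not.1 hxN'
        apply hx
        -- x ∉ frontier U: either in the interior or outside the closure
        rcases (by
          by_cases hc : x ∈ closure U
          · right
            by_contra hi
            exact hxF ⟨hc, hi⟩
          · left; exact hc : x ∉ closure U ∨ x ∈ interior U) with hcase | hcase
        · -- outside the closure: the envelope agrees with g' near x
          have hopen : IsOpen (closure U)ᶜ := isOpen_compl_iff.2 isClosed_closure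
          have hmem : (closure U)ᶜ ∈ nhds x := hopen.mem_nhds hcase
          have heq : ∀ y ∈ (closure U)ᶜ, g' y = s.sup' hs fun p => p.eval y := by
            intro y hy
            have hyU : y ∉ U := fun h => hy (subset_closure h)
            simp only [hU, Set.mem_setOf_eq, not_forall] at hyU
            obtain ⟨p, hp, hple⟩ := hyU
            push_neg at hple
            have hle : p0.eval y ≤ g' y :=
              le_trans hple (Finset.le_sup' (fun p => p.eval y) hp)
            rw [hsup y, sup_eq_right.2 hle]
          exact hg'a.congr (Filter.eventually_of_mem hmem heq)
        · -- in the interior: the envelope agrees with eval p0 near x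
          have hmem : interior U ∈ nhds x := isOpen_interior.mem_nhds hcase
          have heq : ∀ y ∈ interior U, p0.eval y = s.sup' hs fun p => p.eval y := by
            intro y hy
            have hyU : y ∈ U := interior_subset hy
            have hle : g' y ≤ p0.eval y :=
              Finset.sup'_le htne _ fun p hp => (hyU p hp).le
            rw [hsup y, sup_eq_left.2 hle]
          exact ((AnalyticOnNhd.eval_polynomial (𝕜 := ℝ) p0) x (Set.mem_univ x)).congr
            (Filter.eventually_of_mem hmem heq)
      have hfin : N.Finite := (hN'fin.union hFfin).subset hincl
      refine ⟨hfin, ?_⟩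
      have hcard1 : N.ncard ≤ (N' ∪ frontier U).ncard :=
        Set.ncard_le_ncard hincl (hN'fin.union hFfin)
      have hcard2 : (N' ∪ frontier U).ncard ≤ N'.ncard + (frontier U).ncard :=
        Set.ncard_union_le N' (frontier U)
      have htcard : t.card = s.card - 1 := Finset.card_erase_of_mem hp0s
      have hscard : 2 ≤ s.card := by
        have h1 : 1 ≤ t.card := Finset.card_pos.2 htne
        have h2 : t.card < s.card := Finset.card_lt_card hts
        omega
      calc N.ncard ≤ N'.ncard + (frontier U).ncard := hcard1.trans hcard2
        _ ≤ 2 * (t.card - 1) + 2 := by omega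
        _ ≤ 2 * (s.card - 1) := by omega

/-- The upper envelope of `q` pairwise distinct real polynomials of degree at most `2` has
at most `2(q-1)` points of non-analyticity (switching points). -/
theorem stmt_16 (q : ℕ) (hq : 0 < q) (f : Fin q → Polynomial ℝ)
    (hdeg : ∀ j, (f j).degree ≤ 2) (hinj : Function.Injective f) :
    {x : ℝ | ¬ AnalyticAt ℝ (fun y => ⨆ j : Fin q, (f j).eval y) x}.Finite ∧
    {x : ℝ | ¬ AnalyticAt ℝ (fun y => ⨆ j : Fin q, (f j).eval y) x}.ncard ≤ 2 * (q - 1) := by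
  classical
  have hne : Nonempty (Fin q) := ⟨⟨0, hq⟩⟩
  set s : Finset (Polynomial ℝ) := Finset.univ.image f with hsdef
  have hs : s.Nonempty := Finset.Nonempty.image Finset.univ_nonempty f
  have hfun : (fun y => ⨆ j : Fin q, (f j).eval y)
      = fun y => s.sup' hs fun p => p.eval y := by
    funext y
    rw [← Finset.sup'_univ_eq_ciSup (fun j => (f j).eval y)]
    exact (Finset.sup'_image hs (fun p => p.eval y)).symm
  have hdeg' : ∀ p ∈ s, p.degree ≤ 2 := by
    intro p hp
    rw [hsdef, Finset.mem_image] at hp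
    obtain ⟨j, _, rfl⟩ := hp
    exact hdeg j
  have hcard : s.card = q := by
    rw [hsdef, Finset.card_image_of_injective _ hinj, Finset.card_univ, Fintype.card_fin]
  rw [hfun]
  have := envelope_aux s hs hdeg'
  rw [hcard] at this
  exact this
end
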